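/- Let (S, 𝓕) be a measurable space, let P be a probability measure on it, let 𝒬 be a nonempty set of probability measures on (S,𝓕), let g : S → ℝ be bounded and measurable, and let β > 0. Define f(α) = sup{ R_α(Q‖P) : Q ∈ 𝒬 } for α > 1. Then sup_{Q ∈ 𝒬} (1/β)·log ∫ e^{β g} dQ ≤ inf_{γ > β} F(β,γ), where F(β,γ) = f(γ/(γ−β))/(γ−β) + (1/γ)·log ∫ e^{γ g} dP (inequality of values in [−∞, +∞]). -/

import Mathlib

open MeasureTheory Classical
open scoped ENNReal NNReal

/-- The Rényi divergence of degree `α` of `Q` with respect to `P`: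
`R_α(Q‖P) = (1/(α(α−1)))·log ∫ (dQ/dP)^α dP` if `Q ≪ P`, and `+∞` otherwise. -/
noncomputable def renyiDiv {S : Type*} [MeasurableSpace S] (α : ℝ)
    (Q P : Measure S) : EReal :=
  if Q ≪ P then
    (((α * (α - 1))⁻¹ : ℝ) : EReal) * ENNReal.log (∫⁻ x, Q.rnDeriv P x ^ α ∂P)
  else ⊤

private lemma renyi_key {S : Type*} [MeasurableSpace S]
    (P : Measure S) [IsProbabilityMeasure P]
    (Q : Measure S) [IsProbabilityMeasure Q]
    (g : S → ℝ) (hg : Measurable g) (M : ℝ) (hM : ∀ x, |g x| ≤ M)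
    (β γ : ℝ) (hβ : 0 < β) (hγ : β < γ) :
    ((β⁻¹ * Real.log (∫ x, Real.exp (β * g x) ∂Q) : ℝ) : EReal) ≤
      (((γ - β)⁻¹ : ℝ) : EReal) * renyiDiv (γ / (γ - β)) Q P
          + ((γ⁻¹ * Real.log (∫ x, Real.exp (γ * g x) ∂P) : ℝ) : EReal) := by
  unfold renyiDiv
  have hγ0 : (0:ℝ) < γ := hβ.trans hγ
  have hγβ : (0:ℝ) < γ - β := sub_pos.2 hγ
  set α : ℝ := γ / (γ - β) with hα
  have hα1 : 1 < α := (one_lt_div hγβ).2 (by linarith)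
  by_cases hQP : Q ≪ P
  swap
  · rw [if_neg hQP, EReal.coe_mul_top_of_pos (by positivity), EReal.top_add_coe]
    exact le_top
  rw [if_pos hQP]
  set r : S → ℝ≥0∞ := Q.rnDeriv P with hr
  have hrm : Measurable r := Measure.measurable_rnDeriv Q P
  set f : S → ℝ≥0∞ := fun x => ENNReal.ofReal (Real.exp (β * g x)) with hf
  have hfm : Measurable f := (Real.measurable_exp.comp (hg.const_mul β)).ennreal_ofReal
  set A : ℝ≥0∞ := ∫⁻ x, f x ∂Q with hA
  set B : ℝ≥0∞ := ∫⁻ x, ENNReal.ofReal (Real.exp (γ * g x)) ∂P with hB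
  set C : ℝ≥0∞ := ∫⁻ x, r x ^ α ∂P with hC
  -- bounds on A
  have hA_le : A ≤ ENNReal.ofReal (Real.exp (β * M)) := by
    calc A ≤ ∫⁻ _, ENNReal.ofReal (Real.exp (β * M)) ∂Q := by
          refine lintegral_mono fun x => ENNReal.ofReal_le_ofReal (Real.exp_le_exp.2 ?_)
          have := (abs_le.1 (hM x)).2
          nlinarith
      _ = ENNReal.ofReal (Real.exp (β * M)) := by simp
  have hA_ge : ENNReal.ofReal (Real.exp (-(β * M))) ≤ A := by
    calc ENNReal.ofReal (Real.exp (-(β * M)))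
        = ∫⁻ _, ENNReal.ofReal (Real.exp (-(β * M))) ∂Q := by simp
      _ ≤ A := by
          refine lintegral_mono fun x => ENNReal.ofReal_le_ofReal (Real.exp_le_exp.2 ?_)
          have := (abs_le.1 (hM x)).1
          nlinarith
  have hA_ne_top : A ≠ ⊤ := (hA_le.trans_lt ENNReal.ofReal_lt_top).ne
  have hA_ne_zero : A ≠ 0 :=
    fun h => by simp [h, ENNReal.ofReal_eq_zero, (Real.exp_pos _).not_ge] at hA_ge
  have hB_le : B ≤ ENNReal.ofReal (Real.exp (γ * M)) := by
    calc B ≤ ∫⁻ _, ENNReal.ofReal (Real.exp (γ * M)) ∂P := by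
          refine lintegral_mono fun x => ENNReal.ofReal_le_ofReal (Real.exp_le_exp.2 ?_)
          have := (abs_le.1 (hM x)).2
          nlinarith
      _ = ENNReal.ofReal (Real.exp (γ * M)) := by simp
  have hB_ge : ENNReal.ofReal (Real.exp (-(γ * M))) ≤ B := by
    calc ENNReal.ofReal (Real.exp (-(γ * M)))
        = ∫⁻ _, ENNReal.ofReal (Real.exp (-(γ * M))) ∂P := by simp
      _ ≤ B := by
          refine lintegral_mono fun x => ENNReal.ofReal_le_ofReal (Real.exp_le_exp.2 ?_)
          have := (abs_le.1 (hM x)).1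
          nlinarith
  have hB_ne_top : B ≠ ⊤ := (hB_le.trans_lt ENNReal.ofReal_lt_top).ne
  have hB_ne_zero : B ≠ 0 :=
    fun h => by simp [h, ENNReal.ofReal_eq_zero, (Real.exp_pos _).not_ge] at hB_ge
  -- express A as integral against P
  have hA_eq : A = ∫⁻ x, (f * r) x ∂P := by
    conv_lhs => rw [hA, ← Measure.withDensity_rnDeriv_eq Q P hQP]
    rw [lintegral_withDensity_eq_lintegral_mul _ hrm hfm]
    exact lintegral_congr fun x => mul_comm _ _
  -- Hölder
  have hpq : (γ / β).HolderConjugate α := by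
    rw [Real.holderConjugate_iff]
    constructor
    · exact (one_lt_div hβ).2 hγ
    · rw [hα]
      field_simp
      ring
  have hBp : (∫⁻ x, f x ^ (γ / β) ∂P) = B := by
    refine lintegral_congr fun x => ?_
    show ENNReal.ofReal (Real.exp (β * g x)) ^ (γ / β) = ENNReal.ofReal (Real.exp (γ * g x))
    rw [ENNReal.ofReal_rpow_of_pos (Real.exp_pos _), ← Real.exp_mul]
    congr 2
    field_simp
  have holder : A ≤ B ^ (1 / (γ / β)) * C ^ (1 / α) := by
    rw [hA_eq] at *
    calc (∫⁻ x, (f * r) x ∂P)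
        ≤ (∫⁻ x, f x ^ (γ / β) ∂P) ^ (1 / (γ / β)) * (∫⁻ x, r x ^ α ∂P) ^ (1 / α) :=
          ENNReal.lintegral_mul_le_Lp_mul_Lq P hpq hfm.aemeasurable hrm.aemeasurable
      _ = B ^ (1 / (γ / β)) * C ^ (1 / α) := by rw [hBp]
  -- C = ⊤ case
  by_cases hC_top : C = ⊤
  · rw [hC_top, ENNReal.log_top,
      EReal.coe_mul_top_of_pos (inv_pos.2 (mul_pos (by linarith) (by linarith))),
      EReal.coe_mul_top_of_pos (by positivity), EReal.top_add_coe]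
    exact le_top
  have hC_ne_zero : C ≠ 0 := by
    intro h
    rw [h, ENNReal.zero_rpow_of_pos (by positivity), mul_zero] at holder
    exact hA_ne_zero (le_antisymm holder zero_le)
  -- pass to reals
  set a : ℝ := A.toReal with ha
  set b : ℝ := B.toReal with hb
  set c : ℝ := C.toReal with hc
  have ha0 : 0 < a := ENNReal.toReal_pos hA_ne_zero hA_ne_top
  have hb0 : 0 < b := ENNReal.toReal_pos hB_ne_zero hB_ne_top
  have hc0 : 0 < c := ENNReal.toReal_pos hC_ne_zero hC_top
  have holder' : a ≤ b ^ (1 / (γ / β)) * c ^ (1 / α) := by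
    have := ENNReal.toReal_mono
      (ENNReal.mul_ne_top (ENNReal.rpow_ne_top_of_nonneg (by positivity) hB_ne_top)
        (ENNReal.rpow_ne_top_of_nonneg (by positivity) hC_top)) holder
    rwa [ENNReal.toReal_mul, ← ENNReal.toReal_rpow, ← ENNReal.toReal_rpow] at this
  have hlog : Real.log a ≤ (1 / (γ / β)) * Real.log b + (1 / α) * Real.log c := by
    have := Real.log_le_log ha0 holder'
    rwa [Real.log_mul (by positivity) (by positivity), Real.log_rpow hb0,
      Real.log_rpow hc0] at this
  -- integrals to lintegrals
  have hintA : ∫ x, Real.exp (β * g x) ∂Q = a := by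
    rw [ha, hA, integral_eq_lintegral_of_nonneg_ae (Filter.Eventually.of_forall fun x => (Real.exp_pos _).le)
      ((Real.measurable_exp.comp (hg.const_mul β)).aestronglyMeasurable)]
  have hintB : ∫ x, Real.exp (γ * g x) ∂P = b := by
    rw [hb, hB, integral_eq_lintegral_of_nonneg_ae (Filter.Eventually.of_forall fun x => (Real.exp_pos _).le)
      ((Real.measurable_exp.comp (hg.const_mul γ)).aestronglyMeasurable)]
  rw [hintA, hintB, ENNReal.log_pos_real' hc0, ← hc, ← EReal.coe_mul, ← EReal.coe_mul,
    ← EReal.coe_add, EReal.coe_le_coe_iff]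
  have hαval : (γ - β)⁻¹ * ((α * (α - 1))⁻¹ * Real.log c)
      = (γ - β) / (γ * β) * Real.log c := by
    rw [← mul_assoc]
    congr 1
    rw [hα]
    field_simp
    rw [sub_sub_cancel, div_self hβ.ne']
  rw [hαval]
  have h1 : 1 / (γ / β) = β / γ := by field_simp
  have h2 : 1 / α = (γ - β) / γ := by rw [hα]; field_simp
  rw [h1, h2] at hlog
  have hmul := mul_le_mul_of_nonneg_left hlog (le_of_lt (inv_pos.2 hβ))
  calc β⁻¹ * Real.log a ≤ β⁻¹ * (β / γ * Real.log b + (γ - β) / γ * Real.log c) := hmul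
    _ = (γ - β) / (γ * β) * Real.log c + γ⁻¹ * Real.log b := by field_simp; ring

/-- Robust risk-sensitive bound: with `f(α) = sup_{Q ∈ 𝒬} R_α(Q‖P)`,
`sup_{Q ∈ 𝒬} (1/β)·log ∫ e^{βg} dQ ≤ inf_{γ > β} [ f(γ/(γ−β))/(γ−β) + (1/γ)·log ∫ e^{γg} dP ]`. -/
theorem robust_risk_sensitive_bound {S : Type*} [MeasurableSpace S]
    (P : Measure S) [IsProbabilityMeasure P]
    (𝒬 : Set (Measure S)) (h𝒬 : 𝒬.Nonempty) (hprob : ∀ Q ∈ 𝒬, IsProbabilityMeasure Q)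
    (g : S → ℝ) (hg : Measurable g) (hbd : ∃ M : ℝ, ∀ x, |g x| ≤ M)
    (β : ℝ) (hβ : 0 < β) :
    (⨆ Q ∈ 𝒬, ((β⁻¹ * Real.log (∫ x, Real.exp (β * g x) ∂Q) : ℝ) : EReal)) ≤
      ⨅ γ ∈ Set.Ioi β,
        (((γ - β)⁻¹ : ℝ) : EReal) * (⨆ Q ∈ 𝒬, renyiDiv (γ / (γ - β)) Q P)
          + ((γ⁻¹ * Real.log (∫ x, Real.exp (γ * g x) ∂P) : ℝ) : EReal) := by
  obtain ⟨M, hM⟩ := hbd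
  refine iSup₂_le fun Q hQ => le_iInf₂ fun γ hγ => ?_
  haveI := hprob Q hQ
  rw [Set.mem_Ioi] at hγ
  refine (renyi_key P Q g hg M hM β γ hβ hγ).trans ?_
  refine add_le_add ?_ le_rfl
  refine mul_le_mul_of_nonneg_left ?_ (by exact_mod_cast inv_nonneg.2 (by linarith : (0:ℝ) ≤ γ - β))
  exact le_iSup₂ (f := fun Q' (_ : Q' ∈ 𝒬) => renyiDiv (γ / (γ - β)) Q' P) Q hQ
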